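/- arXiv:1412.8303 — 16 statements merged into one kernel-verified Lean document; each statement's English description precedes it below -/
import Mathlib

section
/- The closure of a t-analytic set is t-analytic: if A is a Banach function algebra on a compact Hausdorff space X and E ⊆ X is t-analytic for A, then the closure of E is also t-analytic for A. -/
open Set

/-- `E` is a t-analytic set for the function algebra `A`: any `f ∈ A` vanishing on a
nonempty relatively open subset of `E` vanishes on all of `E`. -/
def TAnalytic {X : Type*} [TopologicalSpace X] (A : Subalgebra ℂ C(X, ℂ)) (E : Set X) : Prop :=
  ∀ f ∈ A, ∀ U : Set X, IsOpen U → (U ∩ E).Nonempty →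
    (∀ x ∈ U ∩ E, f x = 0) → ∀ x ∈ E, f x = 0

theorem closure_tAnalytic {X : Type*} [TopologicalSpace X] [CompactSpace X] [T2Space X]
    (A : Subalgebra ℂ C(X, ℂ)) (E : Set X) (hE : TAnalytic A E) :
    TAnalytic A (closure E) := by
  intro f hf U hU hne hvan x hx
  obtain ⟨y, hyU, hyE⟩ := hne
  have hUE : (U ∩ E).Nonempty := by
    rcases mem_closure_iff.mp hyE U hU hyU with ⟨z, hzU, hzE⟩
    exact ⟨z, hzU, hzE⟩
  have hEz : ∀ x ∈ E, f x = 0 :=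
    hE f hf U hU hUE (fun x ⟨h1, h2⟩ => hvan x ⟨h1, subset_closure h2⟩)
  have hcl : closure E ⊆ f ⁻¹' {0} :=
    closure_minimal (fun x hx => hEz x hx) (isClosed_singleton.preimage f.continuous)
  exact hcl hx
end

section
/- If C is a connected open subset of X which is a union of open sets C_λ each of which is t-analytic for A, then C is t-analytic for A. -/
open Set

theorem tAnalytic_of_union_open {X : Type*} [TopologicalSpace X] [CompactSpace X] [T2Space X]
    (A : Subalgebra ℂ C(X, ℂ)) {ι : Type*} (C : Set X) (Cf : ι → Set X)
    (hopen : ∀ i, IsOpen (Cf i)) (ht : ∀ i, TAnalytic A (Cf i))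
    (hC : C = ⋃ i, Cf i) (hconn : IsConnected C) (hCopen : IsOpen C) :
    TAnalytic A C := by
  intro f hf U hU hne hvan x hx
  -- S: union of pieces on which f vanishes identically
  set S : Set X := ⋃ i ∈ {i | ∀ y ∈ Cf i, f y = 0}, Cf i with hS
  -- T: union of pieces disjoint from S
  set T : Set X := ⋃ i ∈ {i | Disjoint (Cf i) S}, Cf i with hT
  have hSopen : IsOpen S := isOpen_biUnion fun i _ => hopen i
  have hTopen : IsOpen T := isOpen_biUnion fun i _ => hopen i
  have hfS : ∀ y ∈ S, f y = 0 := by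
    intro y hy
    rcases mem_iUnion₂.1 hy with ⟨i, hi, hyi⟩
    exact hi y hyi
  -- any piece meeting S is entirely in S
  have key : ∀ j, (Cf j ∩ S).Nonempty → Cf j ⊆ S := by
    intro j hj
    have hz : ∀ y ∈ Cf j, f y = 0 := by
      refine ht j f hf S hSopen ?_ ?_
      · rcases hj with ⟨z, hz1, hz2⟩; exact ⟨z, hz2, hz1⟩
      · intro y hy; exact hfS y hy.1
    intro y hy
    exact mem_iUnion₂.2 ⟨j, hz, hy⟩
  -- C ⊆ S ∪ T
  have hcover : C ⊆ S ∪ T := by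
    intro y hy
    rw [hC] at hy
    rcases mem_iUnion.1 hy with ⟨j, hyj⟩
    by_cases h : (Cf j ∩ S).Nonempty
    · exact Or.inl (key j h hyj)
    · refine Or.inr (mem_iUnion₂.2 ⟨j, ?_, hyj⟩)
      exact disjoint_left.2 fun z hz1 hz2 => h ⟨z, hz1, hz2⟩
  -- C ∩ S nonempty
  have hCS : (C ∩ S).Nonempty := by
    rcases hne with ⟨z, hzU, hzC⟩
    have hzC' := hzC
    rw [hC] at hzC'
    rcases mem_iUnion.1 hzC' with ⟨j, hzj⟩
    have hz : ∀ y ∈ Cf j, f y = 0 := by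
      refine ht j f hf U hU ⟨z, hzU, hzj⟩ ?_
      intro y ⟨hy1, hy2⟩
      exact hvan y ⟨hy1, by rw [hC]; exact mem_iUnion.2 ⟨j, hy2⟩⟩
    exact ⟨z, hzC, mem_iUnion₂.2 ⟨j, hz, hzj⟩⟩
  -- S ∩ T ∩ C empty
  have hdisj : C ∩ (S ∩ T) = ∅ := by
    ext y
    simp only [mem_inter_iff, mem_empty_iff_false, iff_false, not_and]
    intro _ hyS hyT
    rcases mem_iUnion₂.1 hyT with ⟨j, hj, hyj⟩
    exact (disjoint_left.1 hj hyj) hyS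
  -- connectedness: C ∩ T must be empty
  have hCT : ¬ (C ∩ T).Nonempty := by
    intro hCT
    have := hconn.isPreconnected S T hSopen hTopen hcover hCS hCT
    rw [← inter_assoc] at hdisj
    rcases this with ⟨z, hz⟩
    have : z ∈ C ∩ S ∩ T := ⟨⟨hz.1, hz.2.1⟩, hz.2.2⟩
    rw [hdisj] at this
    exact this
  have hxS : x ∈ S := by
    rcases hcover hx with h | h
    · exact h
    · exact absurd ⟨x, hx, h⟩ hCT
  exact hfS x hxS
end

section
/- If O₁ and O₂ are open t-analytic sets for A with nonempty intersection, then O₁ ∪ O₂ is an open t-analytic set for A. -/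
open Set

theorem tAnalytic_union_of_open_inter {X : Type*} [TopologicalSpace X] [CompactSpace X]
    [T2Space X] (A : Subalgebra ℂ C(X, ℂ)) (O₁ O₂ : Set X)
    (h₁ : IsOpen O₁) (h₂ : IsOpen O₂) (ht₁ : TAnalytic A O₁) (ht₂ : TAnalytic A O₂)
    (hne : (O₁ ∩ O₂).Nonempty) :
    IsOpen (O₁ ∪ O₂) ∧ TAnalytic A (O₁ ∪ O₂) := by
  refine ⟨h₁.union h₂, ?_⟩
  intro f hf U hU hUne hvan
  -- f vanishes on both O₁ and O₂
  have key : (∀ x ∈ O₁, f x = 0) ∧ (∀ x ∈ O₂, f x = 0) := by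
    obtain ⟨x, hxU, hx⟩ := hUne
    rcases hx with hx | hx
    · have hf1 : ∀ y ∈ O₁, f y = 0 := by
        refine ht₁ f hf U hU ⟨x, hxU, hx⟩ ?_
        intro y ⟨hyU, hyO⟩
        exact hvan y ⟨hyU, Or.inl hyO⟩
      refine ⟨hf1, ?_⟩
      refine ht₂ f hf O₁ h₁ hne ?_
      intro y ⟨hy1, _⟩
      exact hf1 y hy1
    · have hf2 : ∀ y ∈ O₂, f y = 0 := by
        refine ht₂ f hf U hU ⟨x, hxU, hx⟩ ?_
        intro y ⟨hyU, hyO⟩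
        exact hvan y ⟨hyU, Or.inr hyO⟩
      refine ⟨?_, hf2⟩
      refine ht₁ f hf O₂ h₂ ⟨hne.choose, hne.choose_spec.2, hne.choose_spec.1⟩ ?_
      intro y ⟨hy2, _⟩
      exact hf2 y hy2
  rintro x (hx | hx)
  · exact key.1 x hx
  · exact key.2 x hx
end

section
/- Every t-analytic set for A is contained in at least one maximal t-analytic set for A, and every maximal t-analytic set is closed. -/
open Set

/-- The union of a chain of t-analytic sets is t-analytic. -/
lemma tAnalytic_sUnion_chain_s4 {X : Type*} [TopologicalSpace X] (A : Subalgebra ℂ C(X, ℂ))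
    (c : Set (Set X)) (hc : IsChain (· ⊆ ·) c) (h : ∀ M ∈ c, TAnalytic A M) :
    TAnalytic A (⋃₀ c) := by
  intro f hf U hU hne hvan x hx
  obtain ⟨M, hM, hxM⟩ := hx
  obtain ⟨y, hyU, M₀, hM₀, hyM₀⟩ := hne
  -- get a common chain member containing both M and M₀
  rcases eq_or_ne M M₀ with rfl | hMM
  · exact h M hM f hf U hU ⟨y, hyU, hyM₀⟩
      (fun z hz => hvan z ⟨hz.1, M, hM, hz.2⟩) x hxM
  · rcases hc hM hM₀ hMM with hsub | hsub
    · exact h M₀ hM₀ f hf U hU ⟨y, hyU, hyM₀⟩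
        (fun z hz => hvan z ⟨hz.1, M₀, hM₀, hz.2⟩) x (hsub hxM)
    · exact h M hM f hf U hU ⟨y, hyU, hsub hyM₀⟩
        (fun z hz => hvan z ⟨hz.1, M, hM, hz.2⟩) x hxM

/-- The closure of a t-analytic set is t-analytic. -/
lemma tAnalytic_closure {X : Type*} [TopologicalSpace X] (A : Subalgebra ℂ C(X, ℂ))
    (M : Set X) (hM : TAnalytic A M) : TAnalytic A (closure M) := by
  intro f hf U hU hne hvan
  obtain ⟨y, hyU, hyM⟩ := hne
  have hUM : (U ∩ M).Nonempty := by
    have := mem_closure_iff.mp hyM U hU hyU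
    exact this
  have hfM : ∀ x ∈ M, f x = 0 :=
    hM f hf U hU hUM (fun z hz => hvan z ⟨hz.1, subset_closure hz.2⟩)
  intro x hx
  -- f is continuous and vanishes on M, hence on closure M
  have : closure M ⊆ (⇑f) ⁻¹' {0} := by
    apply closure_minimal (fun z hz => hfM z hz)
    exact IsClosed.preimage f.continuous isClosed_singleton
  exact this hx

theorem exists_maximal_tAnalytic {X : Type*} [TopologicalSpace X] [CompactSpace X] [T2Space X]
    (A : Subalgebra ℂ C(X, ℂ)) :
    (∀ E : Set X, TAnalytic A E →
      ∃ M : Set X, TAnalytic A M ∧ E ⊆ M ∧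
        ∀ M' : Set X, TAnalytic A M' → M ⊆ M' → M' = M) ∧
    (∀ M : Set X, TAnalytic A M →
      (∀ M' : Set X, TAnalytic A M' → M ⊆ M' → M' = M) → IsClosed M) := by
  constructor
  · intro E hE
    obtain ⟨m, hEm, hmS, hmax⟩ := zorn_subset_nonempty {M : Set X | TAnalytic A M}
      (fun c hcS hc hne => ⟨⋃₀ c, tAnalytic_sUnion_chain_s4 A c hc (fun M hM => hcS hM),
        fun s hs => subset_sUnion_of_mem hs⟩) E hE
    exact ⟨m, hmS, hEm, fun M' hM' hmM' => subset_antisymm (hmax hM' hmM') hmM'⟩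
  · intro M hM hmax
    have := hmax (closure M) (tAnalytic_closure A M hM) subset_closure
    rw [← this]
    exact isClosed_closure
end

section
/- The union of a nonempty chain (totally ordered family under inclusion) of t-analytic sets for A is again a t-analytic set for A. -/
open Set

theorem tAnalytic_sUnion_chain {X : Type*} [TopologicalSpace X] [CompactSpace X] [T2Space X]
    (A : Subalgebra ℂ C(X, ℂ)) (S : Set (Set X)) (hne : S.Nonempty)
    (hchain : IsChain (· ⊆ ·) S) (ht : ∀ E ∈ S, TAnalytic A E) :
    TAnalytic A (⋃₀ S) := by
  intro f hf U hU ⟨y, hyU, hyS⟩ hvan x hx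
  obtain ⟨E, hES, hxE⟩ := hx
  obtain ⟨F, hFS, hyF⟩ := hyS
  rcases hchain.total hES hFS with h | h
  · exact ht F hFS f hf U hU ⟨y, hyU, hyF⟩
      (fun z hz => hvan z ⟨hz.1, F, hFS, hz.2⟩) x (h hxE)
  · exact ht E hES f hf U hU ⟨y, hyU, h hyF⟩
      (fun z hz => hvan z ⟨hz.1, E, hES, hz.2⟩) x hxE
end

section
/- If E ⊆ X is a nonempty t-analytic set for A, then the ideal I_A(E) = { f ∈ A : f ≡ 0 on E } is a prime ideal of A (and it is closed when A carries a norm in which evaluation is continuous). -/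
open Set

theorem tAnalytic_ideal_prime {X : Type*} [TopologicalSpace X] [CompactSpace X] [T2Space X]
    (A : Subalgebra ℂ C(X, ℂ)) (E : Set X) (hne : E.Nonempty) (hE : TAnalytic A E) :
    (∀ f g : C(X, ℂ), f ∈ A → g ∈ A → (∀ x ∈ E, f x * g x = 0) →
      (∀ x ∈ E, f x = 0) ∨ (∀ x ∈ E, g x = 0)) ∧
    ¬ (∀ x ∈ E, (1 : C(X, ℂ)) x = 0) ∧
    IsClosed {f : C(X, ℂ) | ∀ x ∈ E, f x = 0} := by
  refine ⟨?_, ?_, ?_⟩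
  · intro f g hf hg hfg
    by_cases h : ∀ x ∈ E, f x = 0
    · exact Or.inl h
    · right
      push_neg at h
      obtain ⟨x0, hx0E, hx0⟩ := h
      refine hE g hg {x | f x ≠ 0} (isOpen_ne_fun f.continuous continuous_const)
        ⟨x0, hx0, hx0E⟩ ?_
      intro x ⟨hxU, hxE⟩
      have := hfg x hxE
      exact (mul_eq_zero.mp this).resolve_left hxU
  · intro h
    obtain ⟨x, hx⟩ := hne
    simpa using h x hx
  · have : {f : C(X, ℂ) | ∀ x ∈ E, f x = 0} = ⋂ x ∈ E, {f : C(X, ℂ) | f x = 0} := by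
      ext f; simp
    rw [this]
    refine isClosed_biInter fun x _ => ?_
    exact isClosed_eq (continuous_eval_const x) continuous_const
end

section
/- If E is a t-analytic set for A with at least two points and x ∈ E, then x is not a regularity point of type one for A; i.e., there exists a neighborhood V of x such that every f ∈ A with support contained in V satisfies f(x) ≠ 1 (equivalently, no f ∈ A has f(x) = 1 and supp f ⊆ V). -/
open Set

theorem not_regularity_point_type_one {X : Type*} [TopologicalSpace X] [CompactSpace X]
    [T2Space X] (A : Subalgebra ℂ C(X, ℂ)) (E : Set X) (hE : TAnalytic A E)
    (htwo : ∃ a ∈ E, ∃ b ∈ E, a ≠ b) (x : X) (hx : x ∈ E) :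
    ∃ V ∈ nhds x, ∀ f ∈ A, closure {y | f y ≠ 0} ⊆ V → f x ≠ 1 := by
  obtain ⟨a, ha, b, hb, hab⟩ := htwo
  -- pick a point of E different from x
  obtain ⟨c, hc, hcx⟩ : ∃ c ∈ E, c ≠ x := by
    by_cases h : a = x
    · exact ⟨b, hb, by rw [← h]; exact fun hh => hab hh.symm⟩
    · exact ⟨a, ha, h⟩
  obtain ⟨V, W, hV, hW, hxV, hcW, hVW⟩ := t2_separation (Ne.symm hcx)
  refine ⟨V, hV.mem_nhds hxV, fun f hf hsupp hfx => ?_⟩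
  have hzero : ∀ y ∈ W ∩ E, f y = 0 := by
    intro y hy
    by_contra hne
    have : y ∈ V := hsupp (subset_closure hne)
    exact (Set.disjoint_left.mp hVW this) hy.1
  have := hE f hf W hW ⟨c, hcW, hc⟩ hzero x hx
  rw [this] at hfx
  exact one_ne_zero hfx.symm
end

section
/- If E is a t-analytic set for A with at least two points and x ∈ E, then k_A(x) ≠ {x}; i.e., x is not a regularity point of type two. -/
open Set

/-- The `k`-hull of a point: common zeros of all functions in `A` vanishing near `x`. -/
def kHull {X : Type*} [TopologicalSpace X] (A : Subalgebra ℂ C(X, ℂ)) (x : X) : Set X :=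
  {y | ∀ f ∈ A, (∀ᶠ z in nhds x, f z = 0) → f y = 0}

theorem not_regularity_point_type_two {X : Type*} [TopologicalSpace X] [CompactSpace X]
    [T2Space X] (A : Subalgebra ℂ C(X, ℂ)) (E : Set X) (hE : TAnalytic A E)
    (htwo : ∃ a ∈ E, ∃ b ∈ E, a ≠ b) (x : X) (hx : x ∈ E) :
    kHull A x ≠ {x} := by
  intro hk
  obtain ⟨a, ha, b, hb, hab⟩ := htwo
  -- pick a point of E different from x
  obtain ⟨c, hc, hcx⟩ : ∃ c ∈ E, c ≠ x := by
    by_cases h : a = x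
    · exact ⟨b, hb, fun hbx => hab (h ▸ hbx ▸ rfl)⟩
    · exact ⟨a, ha, h⟩
  -- show c ∈ kHull A x
  have hck : c ∈ kHull A x := by
    intro f hf hev
    obtain ⟨U, hU, hUopen, hxU⟩ := eventually_nhds_iff.mp hev
    exact hE f hf U hUopen ⟨x, hxU, hx⟩ (fun z hz => hU z hz.1) c hc
  rw [hk] at hck
  exact hcx hck
end

section
/- If A is regular (for all x ∈ X and all closed E ⊆ X \ {x} there is f ∈ A with f ≡ 1 on E and f(x) = 0), then every nonempty t-analytic set for A is a singleton. -/
open Set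

theorem regular_tAnalytic_singleton {X : Type*} [TopologicalSpace X] [CompactSpace X]
    [T2Space X] (A : Subalgebra ℂ C(X, ℂ))
    (hreg : ∀ x : X, ∀ E : Set X, IsClosed E → x ∉ E →
      ∃ f ∈ A, (∀ y ∈ E, f y = 1) ∧ f x = 0)
    (E : Set X) (hne : E.Nonempty) (hE : TAnalytic A E) :
    ∃ x : X, E = {x} := by
  obtain ⟨x, hx⟩ := hne
  refine ⟨x, Set.eq_singleton_iff_unique_mem.mpr ⟨hx, fun y hy => ?_⟩⟩
  by_contra hyx
  obtain ⟨V, U, hV, hU, hyV, hxU, hdisj⟩ := t2_separation hyx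
  obtain ⟨f, hfA, hf1, hfx⟩ := hreg x Uᶜ hU.isClosed_compl (by simp [hxU])
  have hgA : (1 - f) ∈ A := sub_mem (one_mem A) hfA
  have hvan : ∀ z ∈ V ∩ E, (1 - f) z = 0 := by
    intro z hz
    have hzU : z ∈ Uᶜ := fun h => Set.disjoint_left.mp hdisj hz.1 h
    simp [hf1 z hzU]
  have := hE (1 - f) hgA V hV ⟨y, hyV, hy⟩ hvan x hx
  simp [hfx] at this
end

section
/- Let E be a closed subset of X and H ⊆ X a hull-kernel closed set (i.e., H equals the set of common zeros of the functions in A vanishing on H). Then E ∪ H is t-analytic for A if and only if (H ⊆ E and E is t-analytic) or (E ⊆ H and H is t-analytic). -/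
open Set

/-- The hull-kernel closure of a set `S`. -/
def hkClosure {X : Type*} [TopologicalSpace X] (A : Subalgebra ℂ C(X, ℂ)) (S : Set X) : Set X :=
  {y | ∀ f ∈ A, (∀ x ∈ S, f x = 0) → f y = 0}

theorem tAnalytic_union_hk {X : Type*} [TopologicalSpace X] [CompactSpace X] [T2Space X]
    (A : Subalgebra ℂ C(X, ℂ)) (E H : Set X) (hEc : IsClosed E)
    (hH : hkClosure A H = H) :
    TAnalytic A (E ∪ H) ↔ (H ⊆ E ∧ TAnalytic A E) ∨ (E ⊆ H ∧ TAnalytic A H) := by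
  constructor
  · intro h
    by_cases hHE : H ⊆ E
    · left
      exact ⟨hHE, by rwa [union_eq_left.mpr hHE] at h⟩
    · right
      obtain ⟨y, hyH, hyE⟩ := not_subset.mp hHE
      have hEH : E ⊆ H := by
        intro x hx
        rw [← hH]
        intro f hf hfH
        refine h f hf Eᶜ hEc.isOpen_compl ⟨y, hyE, Or.inr hyH⟩ ?_ x (Or.inl hx)
        rintro z ⟨hz, hzE | hzH⟩
        · exact absurd hzE hz
        · exact hfH z hzH
      exact ⟨hEH, by rwa [union_eq_right.mpr hEH] at h⟩
  · rintro (⟨h1, h2⟩ | ⟨h1, h2⟩)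
    · rwa [union_eq_left.mpr h1]
    · rwa [union_eq_right.mpr h1]
end

section
/- Let E₁, E₂ be closed subsets of X such that E₁ ∪ E₂ is t-analytic for A. If E₁ is not contained in E₂, then E₂ is contained in the hull-kernel closure of E₁ (i.e., every f ∈ A vanishing identically on E₁ vanishes identically on E₂). -/
open Set

theorem subset_hkClosure_of_union_tAnalytic {X : Type*} [TopologicalSpace X] [CompactSpace X]
    [T2Space X] (A : Subalgebra ℂ C(X, ℂ)) (E₁ E₂ : Set X)
    (h₁ : IsClosed E₁) (h₂ : IsClosed E₂) (ht : TAnalytic A (E₁ ∪ E₂))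
    (hns : ¬ E₁ ⊆ E₂) :
    E₂ ⊆ hkClosure A E₁ := by
  intro y hy f hf hvan
  obtain ⟨x₀, hx₀E₁, hx₀E₂⟩ : ∃ x, x ∈ E₁ ∧ x ∉ E₂ := not_subset.mp hns
  have := ht f hf E₂ᶜ h₂.isOpen_compl ⟨x₀, hx₀E₂, Or.inl hx₀E₁⟩
    (fun x ⟨hxc, hxu⟩ => hvan x (hxu.resolve_right hxc)) y (Or.inr hy)
  exact this
end

section
/- Let E₁, E₂ be closed subsets of X such that E = E₁ ∪ E₂ is t-analytic for A, with neither E₁ ⊆ E₂ nor E₂ ⊆ E₁. Then the hull-kernel closures satisfy Ê = Ê₁ = Ê₂. -/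
open Set

theorem hkClosure_eq_of_union_tAnalytic {X : Type*} [TopologicalSpace X] [CompactSpace X]
    [T2Space X] (A : Subalgebra ℂ C(X, ℂ)) (E₁ E₂ : Set X)
    (h₁ : IsClosed E₁) (h₂ : IsClosed E₂) (ht : TAnalytic A (E₁ ∪ E₂))
    (hns₁ : ¬ E₁ ⊆ E₂) (hns₂ : ¬ E₂ ⊆ E₁) :
    hkClosure A (E₁ ∪ E₂) = hkClosure A E₁ ∧ hkClosure A E₁ = hkClosure A E₂ := by
  -- any f ∈ A vanishing on E₁ vanishes on E₁ ∪ E₂, and similarly for E₂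
  have key : ∀ (Ea Eb : Set X), IsClosed Eb → ¬ Ea ⊆ Eb →
      TAnalytic A (Ea ∪ Eb) →
      ∀ f ∈ A, (∀ x ∈ Ea, f x = 0) → ∀ x ∈ Ea ∪ Eb, f x = 0 := by
    intro Ea Eb hb hns hta f hf hv
    obtain ⟨z, hza, hzb⟩ := not_subset.mp hns
    refine hta f hf Ebᶜ hb.isOpen_compl ⟨z, hzb, Or.inl hza⟩ ?_
    rintro x ⟨hxc, hx⟩
    rcases hx with hx | hx
    · exact hv x hx
    · exact absurd hx hxc
  have k1 := key E₁ E₂ h₂ hns₁ ht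
  have k2 : ∀ f ∈ A, (∀ x ∈ E₂, f x = 0) → ∀ x ∈ E₁ ∪ E₂, f x = 0 := by
    intro f hf hv x hx
    have := key E₂ E₁ h₁ hns₂ (by
      intro g hg U hU hne hvan y hy
      exact ht g hg U hU (by rwa [union_comm] at hne)
        (by rw [union_comm] at hvan; exact hvan) y (by rwa [union_comm] at hy))
      f hf hv
    rw [union_comm] at this
    exact this x hx
  constructor
  · ext y
    constructor
    · intro hy f hf hv
      exact hy f hf (k1 f hf hv)
    · intro hy f hf hv
      exact hy f hf fun x hx => hv x (Or.inl hx)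
  · ext y
    constructor
    · intro hy f hf hv
      exact hy f hf fun x hx => (k2 f hf hv) x (Or.inl hx)
    · intro hy f hf hv
      exact hy f hf fun x hx => (k1 f hf hv) x (Or.inr hx)
end

section
/- Let E ⊆ X be a closed t-analytic set for A and H ⊆ X a hull-kernel closed set. Then either E \ H is empty or E \ H is dense in E. -/
open Set

theorem diff_hk_empty_or_dense {X : Type*} [TopologicalSpace X] [CompactSpace X] [T2Space X]
    (A : Subalgebra ℂ C(X, ℂ)) (E H : Set X) (hEc : IsClosed E) (hE : TAnalytic A E)
    (hH : hkClosure A H = H) :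
    E \ H = ∅ ∨ E ⊆ closure (E \ H) := by
  rcases eq_empty_or_nonempty (E \ H) with h | ⟨z, hz⟩
  · exact Or.inl h
  right
  intro x hx
  by_contra hxc
  -- x has an open nbhd U disjoint from E \ H, i.e. U ∩ E ⊆ H
  rw [mem_closure_iff] at hxc
  push_neg at hxc
  obtain ⟨U, hUo, hxU, hUd⟩ := hxc
  have hsub : U ∩ E ⊆ H := by
    intro y ⟨hyU, hyE⟩
    by_contra hyH
    exact absurd rfl (by simpa using hUd.subset ⟨hyU, hyE, hyH⟩ : (y : X) ≠ y)
  -- every point of E lies in hkClosure A H = H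
  have : E ⊆ H := by
    intro w hw
    rw [← hH]
    intro f hf hfH
    exact hE f hf U hUo ⟨x, hxU, hx⟩ (fun p hp => hfH p (hsub hp)) w hw
  exact hz.2 (this hz.1)
end

section
/- Let E ⊆ X be a closed t-analytic set for A with at least two points. Then E contains no isolated hull-kernel closed subset: there is no nonempty proper subset S of E, with S hull-kernel closed, such that S and E \ S can be separated by disjoint open sets of X. -/
open Set

theorem no_isolated_hk_subset {X : Type*} [TopologicalSpace X] [CompactSpace X] [T2Space X]
    (A : Subalgebra ℂ C(X, ℂ)) (E : Set X) (hEc : IsClosed E) (hE : TAnalytic A E)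
    (htwo : ∃ a ∈ E, ∃ b ∈ E, a ≠ b) :
    ¬ ∃ S : Set X, S.Nonempty ∧ S ⊂ E ∧ hkClosure A S = S ∧
      ∃ U V : Set X, IsOpen U ∧ IsOpen V ∧ Disjoint U V ∧ S ⊆ U ∧ E \ S ⊆ V := by
  rintro ⟨S, hSne, hSE, hhk, U, V, hU, hV, hUV, hSU, hESV⟩
  obtain ⟨b, hbE, hbS⟩ := exists_of_ssubset hSE
  have hbhk : b ∉ hkClosure A S := by rw [hhk]; exact hbS
  simp only [hkClosure, Set.mem_setOf_eq, not_forall] at hbhk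
  obtain ⟨f, hfA, hfS, hfb⟩ := hbhk
  have hUE : U ∩ E = S := by
    apply Set.Subset.antisymm
    · rintro x ⟨hxU, hxE⟩
      by_contra hxS
      exact Set.disjoint_left.mp hUV hxU (hESV ⟨hxE, hxS⟩)
    · exact fun x hx => ⟨hSU hx, hSE.1 hx⟩
  exact hfb <| hE f hfA U hU (hUE ▸ hSne) (fun x hx => hfS x (hUE ▸ hx)) b hbE
end

section
/- Every connected closed subset of the closed unit disk is a t-analytic set for the disk algebra A(𝔻̄). -/
open Set Complex Metric Filter Topology

noncomputable def ec (t : ℝ) : ℂ := Complex.exp (t * Complex.I)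
lemma abs_ec (t : ℝ) : ‖ec t‖ = 1 := Complex.norm_exp_ofReal_mul_I t
lemma ec_add (s t : ℝ) : ec (s + t) = ec s * ec t := by
  rw [ec, ec, ec, ← Complex.exp_add]; push_cast; ring_nf
lemma ec_zero : ec 0 = 1 := by simp [ec]
lemma ec_ne_zero (t : ℝ) : ec t ≠ 0 := Complex.exp_ne_zero _
lemma ec_arg {w : ℂ} (h : ‖w‖ = 1) : ec (Complex.arg w) = w := by
  have := Complex.norm_mul_exp_arg_mul_I w
  rw [h] at this; simpa [ec] using this
lemma ec_mul_ec_neg (t : ℝ) : ec t * ec (-t) = 1 := by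
  rw [← ec_add]; simp [ec_zero]
lemma abs_ec_sub_one_le {t : ℝ} (h : |t| ≤ 1) : ‖ec t - 1‖ ≤ 2 * |t| := by
  have habs : ‖(t : ℂ) * Complex.I‖ = |t| := by
    simp [map_mul, Complex.norm_real]
  calc ‖ec t - 1‖ ≤ 2 * ‖(t : ℂ) * Complex.I‖ :=
        Complex.norm_exp_sub_one_le (by rw [habs]; exact h)
    _ = 2 * |t| := by rw [habs]

lemma zero_on_closedBall_of_zero_on_ball {f : ℂ → ℂ}
    (hc : ContinuousOn f (Metric.closedBall 0 1))
    (h : ∀ z ∈ Metric.ball (0:ℂ) 1, f z = 0) :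
    ∀ z ∈ Metric.closedBall (0:ℂ) 1, f z = 0 := by
  intro z hz
  have hcl : z ∈ closure (Metric.ball (0:ℂ) 1) := by
    rw [closure_ball (0:ℂ) one_ne_zero]; exact hz
  haveI hne : (𝓝[Metric.ball (0:ℂ) 1] z).NeBot := mem_closure_iff_nhdsWithin_neBot.1 hcl
  have h1 : Tendsto f (𝓝[Metric.ball (0:ℂ) 1] z) (𝓝 (f z)) :=
    (hc z hz).mono Metric.ball_subset_closedBall
  have h2 : Tendsto f (𝓝[Metric.ball (0:ℂ) 1] z) (𝓝 0) := by
    apply Tendsto.congr' _ tendsto_const_nhds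
    filter_upwards [self_mem_nhdsWithin] with w hw
    exact (h w hw).symm
  exact tendsto_nhds_unique h1 h2

lemma accPt_of_preconnected {E : Set ℂ} (hconn : IsPreconnected E) {p w : ℂ}
    (hp : p ∈ E) (hw : w ∈ E) (hne : w ≠ p) : (𝓝[E \ {p}] p).NeBot := by
  rw [← mem_closure_iff_nhdsWithin_neBot]
  by_contra hcl
  rw [_root_.mem_closure_iff] at hcl
  push_neg at hcl
  obtain ⟨V, hV, hpV, hVE⟩ := hcl
  have hsub : V ∩ E ⊆ {p} := by
    intro x ⟨hxV, hxE⟩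
    by_contra hxp
    exact (Set.not_nonempty_iff_eq_empty.2 hVE) ⟨x, hxV, hxE, hxp⟩
  have := hconn V {p}ᶜ hV isOpen_compl_singleton
    (fun x hx => by by_cases hxp : x = p
                    · exact Or.inl (hxp ▸ hpV)
                    · exact Or.inr hxp)
    ⟨p, hp, hpV⟩ ⟨w, hw, hne⟩
  obtain ⟨x, hxE, hxV, hxp⟩ := this
  exact hxp (hsub ⟨hxV, hxE⟩)

lemma exists_factor_zero {ι : Type*} (s : Finset ι) (h : ι → ℂ → ℂ)
    (hd : ∀ k ∈ s, DifferentiableOn ℂ (h k) (Metric.ball 0 1))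
    (hz : ∀ w ∈ Metric.ball (0:ℂ) 1, ∏ k ∈ s, h k w = 0) :
    ∃ k ∈ s, ∀ w ∈ Metric.ball (0:ℂ) 1, h k w = 0 := by
  induction s using Finset.cons_induction with
  | empty =>
    exfalso
    have := hz 0 (by simp)
    simp at this
  | cons a s has ih =>
    by_cases hA : ∀ w ∈ Metric.ball (0:ℂ) 1, h a w = 0
    · exact ⟨a, Finset.mem_cons_self _ _, hA⟩
    · push_neg at hA
      obtain ⟨w₀, hw₀, hfa⟩ := hA
      have hda : DifferentiableOn ℂ (h a) (Metric.ball 0 1) :=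
        hd a (Finset.mem_cons_self _ _)
      have hca : ContinuousAt (h a) w₀ := by
        have := (hda.analyticOnNhd Metric.isOpen_ball w₀ hw₀).continuousAt
        exact this
      have hne : ∀ᶠ w in 𝓝 w₀, h a w ≠ 0 := hca.eventually_ne hfa
      have hmem : ∀ᶠ w in 𝓝 w₀, w ∈ Metric.ball (0:ℂ) 1 :=
        Metric.isOpen_ball.mem_nhds hw₀
      have hg : (fun w => ∏ k ∈ s, h k w) =ᶠ[𝓝 w₀] 0 := by
        filter_upwards [hne, hmem] with w hw1 hw2
        have := hz w hw2
        rw [Finset.prod_cons] at this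
        exact (mul_eq_zero.1 this).resolve_left hw1
      have hds : DifferentiableOn ℂ (fun w => ∏ k ∈ s, h k w) (Metric.ball 0 1) :=
        DifferentiableOn.fun_finsetProd (fun k hk => hd k (Finset.mem_cons_of_mem hk))
      have hzero : Set.EqOn (fun w => ∏ k ∈ s, h k w) 0 (Metric.ball 0 1) :=
        (hds.analyticOnNhd Metric.isOpen_ball).eqOn_zero_of_preconnected_of_eventuallyEq_zero
          (convex_ball (0:ℂ) 1).isPreconnected hw₀ hg
      obtain ⟨k, hk, hk0⟩ := ih (fun k hk => hd k (Finset.mem_cons_of_mem hk))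
        (fun w hw => hzero hw)
      exact ⟨k, Finset.mem_cons_of_mem hk, hk0⟩

lemma zero_of_zero_on_arc {f : ℂ → ℂ}
    (hc : ContinuousOn f (Metric.closedBall 0 1))
    (hd : DifferentiableOn ℂ f (Metric.ball 0 1))
    {s ε : ℝ} (hε : 0 < ε)
    (harc : ∀ t : ℝ, s ≤ t → t ≤ s + ε → f (ec t) = 0) :
    ∀ z ∈ Metric.closedBall (0:ℂ) 1, f z = 0 := by
  set K₁ : ℤ := ⌈(s - Real.pi)/ε⌉ with hK₁
  set K₂ : ℤ := ⌈(s + Real.pi)/ε⌉ with hK₂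
  set g : ℂ → ℂ := fun w => ∏ k ∈ Finset.Icc K₁ K₂, f (ec (k*ε) * w) with hg
  have hmapc : ∀ (t : ℝ), Set.MapsTo (fun w : ℂ => ec t * w)
      (Metric.closedBall (0:ℂ) 1) (Metric.closedBall (0:ℂ) 1) := by
    intro t w hw
    simp only [Metric.mem_closedBall, dist_zero_right] at hw ⊢
    rw [norm_mul, show ‖ec t‖ = 1 from abs_ec t, one_mul]; exact hw
  have hmapb : ∀ (t : ℝ), Set.MapsTo (fun w : ℂ => ec t * w)
      (Metric.ball (0:ℂ) 1) (Metric.ball (0:ℂ) 1) := by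
    intro t w hw
    simp only [Metric.mem_ball, dist_zero_right] at hw ⊢
    rw [norm_mul, show ‖ec t‖ = 1 from abs_ec t, one_mul]; exact hw
  have hfc : ∀ (t : ℝ), ContinuousOn (fun w => f (ec t * w)) (Metric.closedBall 0 1) :=
    fun t => hc.comp ((continuous_const.mul continuous_id).continuousOn) (hmapc t)
  have hfd : ∀ (t : ℝ), DifferentiableOn ℂ (fun w => f (ec t * w)) (Metric.ball 0 1) :=
    fun t => hd.comp ((differentiable_id.const_mul (ec t)).differentiableOn) (hmapb t)
  have hgs : ∀ z ∈ Metric.sphere (0:ℂ) 1, g z = 0 := by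
    intro z hz
    have habs : ‖z‖ = 1 := by
      simpa using mem_sphere_zero_iff_norm.1 hz
    set θ := Complex.arg z with hθ
    have hθ1 : -Real.pi < θ := Complex.neg_pi_lt_arg z
    have hθ2 : θ ≤ Real.pi := Complex.arg_le_pi z
    set k : ℤ := ⌈(s - θ)/ε⌉ with hk
    have hk1 : K₁ ≤ k := by
      apply Int.ceil_le_ceil
      gcongr
    have hk2 : k ≤ K₂ := by
      apply Int.ceil_le_ceil
      gcongr
      linarith
    apply Finset.prod_eq_zero (Finset.mem_Icc.2 ⟨hk1, hk2⟩)
    have hz' : ec (k*ε) * z = ec (k*ε + θ) := by rw [ec_add, ec_arg habs]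
    rw [hz']
    have hle : (s - θ)/ε ≤ (k:ℝ) := Int.le_ceil _
    have hlt : (k:ℝ) < (s - θ)/ε + 1 := Int.ceil_lt_add_one _
    have h1 : s ≤ k*ε + θ := by
      have : s - θ ≤ k*ε := by
        calc s - θ = ((s-θ)/ε)*ε := by field_simp
        _ ≤ k*ε := mul_le_mul_of_nonneg_right hle hε.le
      linarith
    have h2 : k*ε + θ ≤ s + ε := by
      have : (k:ℝ)*ε < ((s-θ)/ε + 1)*ε := mul_lt_mul_of_pos_right hlt hε
      have h3 : ((s-θ)/ε + 1)*ε = s - θ + ε := by field_simp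
      linarith
    exact harc _ h1 h2
  have hgc : ContinuousOn g (Metric.closedBall 0 1) :=
    continuousOn_finset_prod _ (fun k _ => hfc (k*ε))
  have hgd : DifferentiableOn ℂ g (Metric.ball 0 1) :=
    DifferentiableOn.fun_finsetProd (fun k _ => hfd (k*ε))
  have hg0 : ∀ z ∈ Metric.closedBall (0:ℂ) 1, g z = 0 := by
    intro z hz
    have hdc : DiffContOnCl ℂ g (Metric.ball 0 1) :=
      ⟨hgd, by rw [closure_ball (0:ℂ) one_ne_zero]; exact hgc⟩
    have hfr : ∀ w ∈ frontier (Metric.ball (0:ℂ) 1), ‖g w‖ ≤ 0 := by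
      intro w hw
      rw [frontier_ball (0:ℂ) one_ne_zero] at hw
      rw [hgs w hw]; simp
    have hzc : z ∈ closure (Metric.ball (0:ℂ) 1) := by
      rw [closure_ball (0:ℂ) one_ne_zero]; exact hz
    have := Complex.norm_le_of_forall_mem_frontier_norm_le Metric.isBounded_ball hdc hfr hzc
    exact norm_le_zero_iff.1 this
  obtain ⟨k, _, hk0⟩ := exists_factor_zero (Finset.Icc K₁ K₂)
    (fun k w => f (ec (k*ε) * w)) (fun k _ => hfd (k*ε))
    (fun w hw => hg0 w (Metric.ball_subset_closedBall hw))
  have hfb : ∀ v ∈ Metric.ball (0:ℂ) 1, f v = 0 := by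
    intro v hv
    have h1 : (ec (k*ε))⁻¹ * v ∈ Metric.ball (0:ℂ) 1 := by
      simp only [mem_ball_zero_iff] at hv ⊢
      rw [norm_mul, norm_inv, show ‖ec (k*ε)‖ = 1 from abs_ec _, inv_one, one_mul]
      exact hv
    have := hk0 _ h1
    rwa [mul_inv_cancel_left₀ (ec_ne_zero _)] at this
  exact zero_on_closedBall_of_zero_on_ball hc hfb

lemma arc_in_E {E : Set ℂ} (hE : E ⊆ Metric.closedBall 0 1)
    (hconn : IsPreconnected E) {z₀ : ℂ} (hz₀ : z₀ ∈ E) (hz₀s : ‖z₀‖ = 1)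
    {w₁ : ℂ} (hw₁ : w₁ ∈ E) (hne : w₁ ≠ z₀)
    {r : ℝ} (hr : 0 < r) (hr1 : r ≤ 1)
    (hsub : ∀ w ∈ E, w ∈ Metric.ball z₀ r → ‖w‖ = 1) :
    ∃ s ε : ℝ, 0 < ε ∧ ∀ t : ℝ, s ≤ t → t ≤ s + ε → ec t ∈ E ∩ Metric.ball z₀ r := by
  set t₀ := Complex.arg z₀ with ht₀
  have hz₀e : ec t₀ = z₀ := ec_arg hz₀s
  set ε₀ := r/12 with hε₀def
  have hε₀ : 0 < ε₀ := by positivity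
  have hε₀1 : ε₀ ≤ 1/12 := by rw [hε₀def]; linarith
  have hpi : (3:ℝ) < Real.pi := Real.pi_gt_three
  have hε₀pi : ε₀ < Real.pi/2 := by linarith
  -- points with angle close to t₀ are in the ball around z₀
  have hC : ∀ t : ℝ, |t - t₀| ≤ ε₀ → ec t ∈ Metric.ball z₀ r := by
    intro t ht
    have h1 : ec t - z₀ = ec t₀ * (ec (t - t₀) - 1) := by
      rw [mul_sub, ← ec_add, mul_one, hz₀e]
      congr 2
      ring
    rw [Metric.mem_ball, Complex.dist_eq, h1, norm_mul, abs_ec, one_mul]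
    calc ‖ec (t - t₀) - 1‖ ≤ 2 * |t - t₀| :=
          abs_ec_sub_one_le (ht.trans (by linarith))
      _ ≤ 2 * ε₀ := by linarith
      _ < r := by rw [hε₀def]; linarith
  by_cases hP : ∀ t : ℝ, t₀ ≤ t → t ≤ t₀ + ε₀ → ec t ∈ E
  · exact ⟨t₀, ε₀, hε₀, fun t h1 h2 =>
      ⟨hP t h1 h2, hC t (abs_le.2 ⟨by linarith, by linarith⟩)⟩⟩
  by_cases hM : ∀ t : ℝ, t₀ - ε₀ ≤ t → t ≤ t₀ → ec t ∈ E
  · exact ⟨t₀ - ε₀, ε₀, hε₀, fun t h1 h2 =>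
      ⟨hM t h1 (by linarith), hC t (abs_le.2 ⟨by linarith, by linarith⟩)⟩⟩
  push_neg at hP hM
  obtain ⟨b, hb1, hb2, hbE⟩ := hP
  obtain ⟨a, ha1, ha2, haE⟩ := hM
  have hb0 : t₀ < b := by
    rcases lt_or_eq_of_le hb1 with h | h
    · exact h
    · exact absurd (h ▸ hz₀e ▸ hz₀ : ec b ∈ E) hbE
  have ha0 : a < t₀ := by
    rcases lt_or_eq_of_le ha2 with h | h
    · exact h
    · exact absurd ((h.symm ▸ hz₀e ▸ hz₀ : ec a ∈ E)) haE
  set c := ec (-t₀) with hcdef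
  have hz₀c : z₀ * c = 1 := by rw [← hz₀e]; exact ec_mul_ec_neg t₀
  set W : Set ℂ := {w | 1 - r/2 < ‖w‖ ∧ 0 < (w * c).re ∧
      a - t₀ < Complex.arg (w * c) ∧ Complex.arg (w * c) < b - t₀} with hWdef
  have hWopen : IsOpen W := by
    rw [isOpen_iff_mem_nhds]
    intro w hw
    obtain ⟨h1, h2, h3, h4⟩ := hw
    have hcont : ContinuousAt (fun v : ℂ => Complex.arg (v * c)) w :=
      ContinuousAt.comp (f := fun v : ℂ => v * c) (Complex.continuousAt_arg (Or.inl h2)) ((continuous_mul_right c).continuousAt)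
    have e1 : {v : ℂ | 1 - r/2 < ‖v‖} ∈ 𝓝 w :=
      (isOpen_lt continuous_const continuous_norm).mem_nhds h1
    have e2 : {v : ℂ | 0 < (v * c).re} ∈ 𝓝 w :=
      (isOpen_lt continuous_const (Complex.continuous_re.comp (continuous_mul_right c))).mem_nhds h2
    have e3 : (fun v : ℂ => Complex.arg (v * c)) ⁻¹' (Set.Ioo (a - t₀) (b - t₀)) ∈ 𝓝 w :=
      hcont.preimage_mem_nhds (isOpen_Ioo.mem_nhds ⟨h3, h4⟩)
    filter_upwards [e1, e2, e3] with v hv1 hv2 hv3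
    exact ⟨hv1, hv2, hv3.1, hv3.2⟩
  have hz₀W : z₀ ∈ W := by
    refine ⟨by rw [hz₀s]; linarith, ?_, ?_, ?_⟩ <;> rw [hz₀c]
    · simp
    · simp only [Complex.arg_one]; linarith
    · simp only [Complex.arg_one]; linarith
  -- key: E ∩ closure W ⊆ W, with extra info
  have hkey : ∀ w ∈ E, w ∈ closure W →
      w ∈ W ∧ ‖w‖ = 1 ∧ w ∈ Metric.ball z₀ r := by
    intro w hwE hwcl
    have hS1 : closure W ⊆ {v : ℂ | 1 - r/2 ≤ ‖v‖} :=
      closure_minimal (fun v hv => hv.1.le)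
        (isClosed_le continuous_const continuous_norm)
    have hS2 : closure W ⊆ {v : ℂ | 0 ≤ (v * c).re} :=
      closure_minimal (fun v hv => hv.2.1.le)
        (isClosed_le continuous_const (Complex.continuous_re.comp (continuous_mul_right c)))
    have hc1 : 1 - r/2 ≤ ‖w‖ := hS1 hwcl
    have hc2 : 0 ≤ (w * c).re := hS2 hwcl
    have hw0 : w ≠ 0 := by
      intro h
      rw [h, norm_zero] at hc1
      linarith
    have hu0 : w * c ≠ 0 := mul_ne_zero hw0 (ec_ne_zero _)
    have hslit : w * c ∈ Complex.slitPlane := by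
      rcases lt_or_eq_of_le hc2 with h | h
      · exact Or.inl h
      · refine Or.inr ?_
        intro him
        exact hu0 (Complex.ext (by simp [← h]) (by simp [him]))
    have hcont : ContinuousAt (fun v : ℂ => Complex.arg (v * c)) w :=
      ContinuousAt.comp (f := fun v : ℂ => v * c) (Complex.continuousAt_arg hslit) ((continuous_mul_right c).continuousAt)
    haveI : (𝓝[W] w).NeBot := mem_closure_iff_nhdsWithin_neBot.1 hwcl
    have htend : Tendsto (fun v : ℂ => Complex.arg (v * c)) (𝓝[W] w)
        (𝓝 (Complex.arg (w * c))) := (hcont.continuousWithinAt)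
    have hub : Complex.arg (w * c) ≤ b - t₀ :=
      le_of_tendsto htend (eventually_of_mem self_mem_nhdsWithin (fun v hv => hv.2.2.2.le))
    have hlb : a - t₀ ≤ Complex.arg (w * c) :=
      ge_of_tendsto htend (eventually_of_mem self_mem_nhdsWithin (fun v hv => hv.2.2.1.le))
    set θ := Complex.arg (w * c) with hθdef
    have hθabs : |θ| ≤ ε₀ := abs_le.2 ⟨by linarith, by linarith⟩
    -- w is in the ball around z₀
    have habsu : ‖w * c‖ = ‖w‖ := by
      rw [norm_mul, hcdef, abs_ec, mul_one]
    have habsw1 : ‖w‖ ≤ 1 := by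
      have := hE hwE
      rw [Metric.mem_closedBall, Complex.dist_eq, sub_zero] at this
      exact this
    have hwue : w = (w * c) * ec t₀ := by
      rw [hcdef, mul_assoc, mul_comm (ec (-t₀)), ec_mul_ec_neg, mul_one]
    have hwz : ‖w - z₀‖ = ‖w * c - 1‖ := by
      conv_lhs => rw [hwue, ← hz₀e]
      rw [show (w * c) * ec t₀ - ec t₀ = (w * c - 1) * ec t₀ by ring, norm_mul, abs_ec, mul_one]
    have hdecomp : ‖w * c - 1‖ ≤ r/2 + 2*ε₀ := by
      have he1 : w * c - 1 = ((‖w*c‖ : ℂ) - 1) * ec θ + (ec θ - 1) := by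
        have := Complex.norm_mul_exp_arg_mul_I (w * c)
        rw [hθdef]
        rw [show ((‖w*c‖ : ℂ) - 1) * ec (Complex.arg (w*c)) + (ec (Complex.arg (w*c)) - 1)
            = (‖w*c‖ : ℂ) * ec (Complex.arg (w*c)) - 1 by ring]
        rw [show ((‖w*c‖ : ℂ)) * ec (Complex.arg (w*c)) = w * c from by
          rw [ec]; exact this]
      calc ‖w * c - 1‖
          ≤ ‖((‖w*c‖ : ℂ) - 1) * ec θ‖ + ‖ec θ - 1‖ := by
            rw [he1]; exact norm_add_le _ _
        _ ≤ r/2 + 2*ε₀ := by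
            have k1 : ‖((‖w*c‖ : ℂ) - 1) * ec θ‖ ≤ r/2 := by
              rw [norm_mul, abs_ec, mul_one]
              rw [show ((‖w*c‖ : ℂ)) - 1 = ((‖w*c‖ - 1 : ℝ) : ℂ) by push_cast; ring]
              rw [Complex.norm_real, Real.norm_eq_abs, habsu]
              rw [abs_le]
              constructor <;> [linarith; linarith]
            have k2 : ‖ec θ - 1‖ ≤ 2*ε₀ := by
              calc ‖ec θ - 1‖ ≤ 2 * |θ| :=
                    abs_ec_sub_one_le (hθabs.trans (by linarith))
                _ ≤ 2*ε₀ := by linarith [hθabs]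
            linarith
    have hwball : w ∈ Metric.ball z₀ r := by
      rw [Metric.mem_ball, Complex.dist_eq, hwz]
      calc ‖w * c - 1‖ ≤ r/2 + 2*ε₀ := hdecomp
        _ < r := by rw [hε₀def]; linarith
    have habsw : ‖w‖ = 1 := hsub w hwE hwball
    have habsu1 : ‖w * c‖ = 1 := by rw [habsu, habsw]
    have huec : w * c = ec θ := (ec_arg habsu1).symm
    have hθa : θ ≠ a - t₀ := by
      intro h
      apply haE
      have : w = ec a := by
        rw [hwue, huec, h, ← ec_add]
        congr 1
        ring
      exact this ▸ hwE
    have hθb : θ ≠ b - t₀ := by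
      intro h
      apply hbE
      have : w = ec b := by
        rw [hwue, huec, h, ← ec_add]
        congr 1
        ring
      exact this ▸ hwE
    have hre : 0 < (w * c).re := by
      have : |θ| < Real.pi/2 := lt_of_le_of_lt hθabs hε₀pi
      rcases Complex.abs_arg_lt_pi_div_two_iff.1 (by rw [← hθdef]; exact this) with h | h
      · exact h
      · exact absurd h hu0
    exact ⟨⟨by rw [habsw]; linarith, hre, lt_of_le_of_ne hlb (Ne.symm hθa),
        lt_of_le_of_ne hub hθb⟩, habsw, hwball⟩
  by_cases hEcl : ∀ w ∈ E, w ∈ closure W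
  · -- E ⊆ W ; use connectedness of the image of arg to extract an arc
    have hEW : ∀ w ∈ E, w ∈ W ∧ ‖w‖ = 1 ∧ w ∈ Metric.ball z₀ r :=
      fun w hw => hkey w hw (hEcl w hw)
    set ψ : ℂ → ℝ := fun w => Complex.arg (w * c) with hψdef
    have hψcont : ContinuousOn ψ E := by
      intro w hw
      exact (ContinuousAt.comp (f := fun v : ℂ => v * c)
        (Complex.continuousAt_arg (Or.inl (hEW w hw).1.2.1))
        ((continuous_mul_right c).continuousAt)).continuousWithinAt
    have himg : IsPreconnected (ψ '' E) := hconn.image ψ hψcont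
    have hψz₀ : ψ z₀ = 0 := by rw [hψdef]; simp only [hz₀c, Complex.arg_one]
    set θ₁ := ψ w₁ with hθ₁def
    have hθ₁ne : θ₁ ≠ 0 := by
      intro h
      apply hne
      have h1 : ‖w₁ * c‖ = 1 := by
        rw [norm_mul, hcdef, abs_ec, mul_one]; exact (hEW w₁ hw₁).2.1
      have h2 : w₁ * c = 1 := by
        rw [← ec_arg h1]
        rw [show Complex.arg (w₁ * c) = (0:ℝ) from h, ec_zero]
      have := hz₀c
      exact mul_right_cancel₀ (ec_ne_zero (-t₀)) (h2.trans this.symm)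
    -- every value in the image gives a point of E on the circle
    have hval : ∀ u ∈ ψ '' E, ec (t₀ + u) ∈ E ∩ Metric.ball z₀ r := by
      rintro u ⟨w, hwE, hwu⟩
      have h1 : ‖w * c‖ = 1 := by
        rw [norm_mul, hcdef, abs_ec, mul_one]; exact (hEW w hwE).2.1
      have h2 : w * c = ec u := by rw [← hwu, hψdef]; exact (ec_arg h1).symm
      have h3 : ec (t₀ + u) = w := by
        rw [ec_add, ← h2, mul_comm (ec t₀), mul_assoc, hcdef,
          mul_comm (ec (-t₀)), ec_mul_ec_neg, mul_one]
      rw [h3]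
      exact ⟨hwE, (hEW w hwE).2.2⟩
    rcases lt_or_gt_of_ne hθ₁ne with hneg | hpos
    · refine ⟨t₀ + θ₁, -θ₁, by linarith, fun t h1 h2 => ?_⟩
      have hu : t - t₀ ∈ Set.Icc θ₁ 0 := ⟨by linarith, by linarith⟩
      have := himg.Icc_subset ⟨w₁, hw₁, rfl⟩ ⟨z₀, hz₀, hψz₀⟩ hu
      have h3 := hval _ this
      rwa [add_sub_cancel] at h3
    · refine ⟨t₀, θ₁, hpos, fun t h1 h2 => ?_⟩
      have hu : t - t₀ ∈ Set.Icc 0 θ₁ := ⟨by linarith, by linarith⟩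
      have := himg.Icc_subset ⟨z₀, hz₀, hψz₀⟩ ⟨w₁, hw₁, rfl⟩ hu
      have h3 := hval _ this
      rwa [add_sub_cancel] at h3
  · push_neg at hEcl
    obtain ⟨w₂, hw₂E, hw₂⟩ := hEcl
    exfalso
    have hsep := hconn W (closure W)ᶜ hWopen isClosed_closure.isOpen_compl
      (fun x hx => by
        by_cases h : x ∈ closure W
        · exact Or.inl (hkey x hx h).1
        · exact Or.inr h)
      ⟨z₀, hz₀, hz₀W⟩ ⟨w₂, hw₂E, hw₂⟩
    obtain ⟨x, _, hxW, hxc⟩ := hsep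
    exact hxc (subset_closure hxW)

/-- `E` is t-analytic for the algebra `A(K)` of functions continuous on `K` and
holomorphic on the interior of `K`. -/
def TAnalyticOn (K E : Set ℂ) : Prop :=
  ∀ f : ℂ → ℂ, ContinuousOn f K → DifferentiableOn ℂ f (interior K) →
    ∀ U : Set ℂ, IsOpen U → (U ∩ E).Nonempty → (∀ x ∈ U ∩ E, f x = 0) → ∀ x ∈ E, f x = 0

theorem connected_closed_tAnalytic_diskAlgebra (E : Set ℂ)
    (hE : E ⊆ Metric.closedBall 0 1) (hclosed : IsClosed E) (hconn : IsConnected E) :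
    TAnalyticOn (Metric.closedBall 0 1) E := by
  intro f hc hd U hU hne hvan
  have hdb : DifferentiableOn ℂ f (Metric.ball 0 1) := by
    rwa [interior_closedBall (0:ℂ) one_ne_zero] at hd
  obtain ⟨z₀, hz₀U, hz₀E⟩ := hne
  by_cases htriv : ∀ x ∈ E, x = z₀
  · intro x hx; rw [htriv x hx]; exact hvan z₀ ⟨hz₀U, hz₀E⟩
  · push_neg at htriv
    obtain ⟨w₁, hw₁E, hw₁ne⟩ := htriv
    by_cases hint : ∃ p ∈ U ∩ E, ‖p‖ < 1
    · obtain ⟨p, ⟨hpU, hpE⟩, hp1⟩ := hint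
      have hq : ∃ q ∈ E, q ≠ p := by
        by_cases h : p = z₀
        · exact ⟨w₁, hw₁E, by rw [h]; exact hw₁ne⟩
        · exact ⟨z₀, hz₀E, fun hh => h hh.symm⟩
      obtain ⟨q, hqE, hqp⟩ := hq
      haveI hnb : (𝓝[E \ {p}] p).NeBot :=
        accPt_of_preconnected hconn.isPreconnected hpE hqE hqp
      have hUn : 𝓝[(E \ {p}) ∩ U] p = 𝓝[E \ {p}] p :=
        nhdsWithin_inter_of_mem' (nhdsWithin_le_nhds (hU.mem_nhds hpU))
      haveI : (𝓝[(E \ {p}) ∩ U] p).NeBot := by rw [hUn]; exact hnb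
      have hfreq : ∃ᶠ z in 𝓝[≠] p, f z = 0 := by
        have hev : ∀ᶠ z in 𝓝[(E \ {p}) ∩ U] p, f z = 0 :=
          eventually_of_mem self_mem_nhdsWithin (fun z hz => hvan z ⟨hz.2, hz.1.1⟩)
        exact hev.frequently.filter_mono (nhdsWithin_mono p (fun z hz => hz.1.2))
      have hana : AnalyticOnNhd ℂ f (Metric.ball 0 1) := hdb.analyticOnNhd Metric.isOpen_ball
      have hpball : p ∈ Metric.ball (0:ℂ) 1 := by
        rw [mem_ball_zero_iff]; exact hp1
      have hzero : Set.EqOn f 0 (Metric.ball 0 1) :=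
        hana.eqOn_zero_of_preconnected_of_frequently_eq_zero
          (convex_ball (0:ℂ) 1).isPreconnected hpball hfreq
      intro x hx
      exact zero_on_closedBall_of_zero_on_ball hc (fun z hz => hzero hz) x (hE hx)
    · push_neg at hint
      have habs1 : ∀ p ∈ U ∩ E, ‖p‖ = 1 := by
        intro p hp
        have h1 : ‖p‖ ≤ 1 := by
          have := hE hp.2
          rwa [Metric.mem_closedBall, Complex.dist_eq, sub_zero] at this
        exact le_antisymm h1 (hint p hp)
      have hz₀s : ‖z₀‖ = 1 := habs1 z₀ ⟨hz₀U, hz₀E⟩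
      obtain ⟨rU, hrU, hrball⟩ := Metric.isOpen_iff.1 hU z₀ hz₀U
      set r := min rU 1 with hrdef
      have hr : 0 < r := lt_min hrU one_pos
      have hr1 : r ≤ 1 := min_le_right _ _
      have hballU : Metric.ball z₀ r ⊆ U :=
        (Metric.ball_subset_ball (min_le_left _ _)).trans hrball
      have hsub : ∀ w ∈ E, w ∈ Metric.ball z₀ r → ‖w‖ = 1 :=
        fun w hwE hwb => habs1 w ⟨hballU hwb, hwE⟩
      obtain ⟨s, ε, hε, harc⟩ :=
        arc_in_E hE hconn.isPreconnected hz₀E hz₀s hw₁E hw₁ne hr hr1 hsub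
      have harcf : ∀ t : ℝ, s ≤ t → t ≤ s + ε → f (ec t) = 0 := by
        intro t h1 h2
        obtain ⟨hEt, hbt⟩ := harc t h1 h2
        exact hvan _ ⟨hballU hbt, hEt⟩
      intro x hx
      exact zero_of_zero_on_arc hc hdb hε harcf x (hE hx)
end

section
/- Let A = A(X) where X = {z : |z| ≤ 1} ∪ {z : |z−2| ≤ 1} (two closed disks touching at 1), the algebra of continuous functions on X holomorphic on the interior of X. Then each closed disk X₁ = {|z| ≤ 1} and X₂ = {|z−2| ≤ 1} is a t-analytic set for A, but X₁ ∪ X₂ = X is not t-analytic for A. -/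
open Set Complex

/-- A closed disk of radius 1 contained in `K` satisfies the t-analytic property. -/
lemma disk_tanalytic (c : ℂ) (K : Set ℂ) (hK : Metric.closedBall c 1 ⊆ K)
    (f : ℂ → ℂ) (hfc : ContinuousOn f K) (hfd : DifferentiableOn ℂ f (interior K))
    (U : Set ℂ) (hU : IsOpen U) (hne : (U ∩ Metric.closedBall c 1).Nonempty)
    (hz : ∀ x ∈ U ∩ Metric.closedBall c 1, f x = 0) :
    ∀ x ∈ Metric.closedBall c 1, f x = 0 := by
  have hball : Metric.ball c 1 ⊆ interior K :=
    interior_maximal (Metric.ball_subset_closedBall.trans hK) Metric.isOpen_ball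
  have hcl : closure (Metric.ball c 1) = Metric.closedBall c 1 := closure_ball c one_ne_zero
  obtain ⟨w, hwU, hwB⟩ := hne
  -- find a point of U inside the open ball
  have hwcl : w ∈ closure (Metric.ball c 1) := hcl ▸ hwB
  obtain ⟨z₀, hz₀U, hz₀B⟩ := _root_.mem_closure_iff.mp hwcl U hU hwU
  -- f analytic on the ball
  have hfa : AnalyticOnNhd ℂ f (Metric.ball c 1) :=
    (hfd.mono hball).analyticOnNhd Metric.isOpen_ball
  have hpre : IsPreconnected (Metric.ball c 1) := (convex_ball c 1).isPreconnected
  have hev : f =ᶠ[nhds z₀] 0 := by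
    filter_upwards [hU.mem_nhds hz₀U, Metric.isOpen_ball.mem_nhds hz₀B] with x hx hx'
    exact hz x ⟨hx, Metric.ball_subset_closedBall hx'⟩
  have hzero : EqOn f 0 (Metric.ball c 1) :=
    hfa.eqOn_zero_of_preconnected_of_eventuallyEq_zero hpre hz₀B hev
  -- extend by continuity
  intro x hx
  have hxcl : x ∈ closure (Metric.ball c 1) := hcl ▸ hx
  have hne' : (nhdsWithin x (Metric.ball c 1)).NeBot :=
    mem_closure_iff_nhdsWithin_neBot.mp hxcl
  have h1 : Filter.Tendsto f (nhdsWithin x (Metric.ball c 1)) (nhds (f x)) :=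
    ((hfc x (hK hx)).mono (Metric.ball_subset_closedBall.trans hK))
  have h2 : Filter.Tendsto f (nhdsWithin x (Metric.ball c 1)) (nhds 0) := by
    refine Filter.Tendsto.congr' ?_ tendsto_const_nhds
    filter_upwards [self_mem_nhdsWithin] with y hy
    exact (hzero hy).symm
  exact tendsto_nhds_unique h1 h2

lemma mem_X_re_eq_one {z : ℂ}
    (hz : z ∈ Metric.closedBall (0:ℂ) 1 ∪ Metric.closedBall 2 1) (hre : z.re = 1) :
    z = 1 := by
  have him : z.im = 0 := by
    rcases hz with h | h
    · have : ‖z - 0‖ ≤ 1 := by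
        rw [← Complex.dist_eq]; exact Metric.mem_closedBall.mp h
      have h2 : Complex.normSq (z - 0) ≤ 1 := by
        rw [← Complex.sq_norm]; nlinarith [norm_nonneg (z - 0)]
      simp only [Complex.normSq_apply, Complex.sub_re, Complex.sub_im, Complex.zero_re,
        Complex.zero_im, sub_zero] at h2
      nlinarith [sq_nonneg z.im]
    · have : ‖z - 2‖ ≤ 1 := by
        rw [← Complex.dist_eq]; exact Metric.mem_closedBall.mp h
      have h2 : Complex.normSq (z - 2) ≤ 1 := by
        rw [← Complex.sq_norm]; nlinarith [norm_nonneg (z - 2)]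
      have hre2 : (z - 2).re = -1 := by
        simp [Complex.sub_re, hre]; norm_num
      have him2 : (z - 2).im = z.im := by simp
      rw [Complex.normSq_apply, hre2, him2] at h2
      nlinarith [sq_nonneg z.im]
  exact Complex.ext (by simpa using hre) (by simpa using him)

theorem kissing_disks_tAnalytic :
    TAnalyticOn (Metric.closedBall 0 1 ∪ Metric.closedBall 2 1) (Metric.closedBall 0 1) ∧
    TAnalyticOn (Metric.closedBall 0 1 ∪ Metric.closedBall 2 1) (Metric.closedBall 2 1) ∧
    ¬ TAnalyticOn (Metric.closedBall 0 1 ∪ Metric.closedBall 2 1)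
        (Metric.closedBall 0 1 ∪ Metric.closedBall 2 1) := by
  refine ⟨fun f hc hd U hU hne hz => disk_tanalytic 0 _ subset_union_left f hc hd U hU hne hz,
    fun f hc hd U hU hne hz => disk_tanalytic 2 _ subset_union_right f hc hd U hU hne hz, ?_⟩
  intro H
  set X : Set ℂ := Metric.closedBall 0 1 ∪ Metric.closedBall 2 1 with hX
  set f : ℂ → ℂ := fun z => if 1 ≤ z.re then 0 else z - 1 with hf
  -- basic bound
  have hbound : ∀ z : ℂ, ‖f z‖ ≤ ‖z - 1‖ := by
    intro z
    by_cases h : 1 ≤ z.re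
    · simp [hf, h]
    · simp [hf, h]
  have hf1 : f 1 = 0 := by simp [hf]
  -- continuity on X
  have hcont : ContinuousOn f X := by
    intro z₀ hz₀
    rcases lt_trichotomy z₀.re 1 with h | h | h
    · have hev : f =ᶠ[nhds z₀] fun z => z - 1 := by
        filter_upwards [(isOpen_lt Complex.continuous_re continuous_const).mem_nhds h] with z hz
        simp only [hf]; rw [if_neg (not_le.mpr hz)]
      exact (((continuous_id.sub continuous_const).continuousAt).congr hev.symm).continuousWithinAt
    · -- z₀ = 1, squeeze
      have hz1 : z₀ = 1 := mem_X_re_eq_one hz₀ h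
      subst hz1
      rw [ContinuousWithinAt, hf1]
      apply squeeze_zero_norm hbound
      have : Filter.Tendsto (fun z : ℂ => ‖z - 1‖) (nhds 1) (nhds ‖(1:ℂ) - 1‖) :=
        (continuous_id.sub continuous_const).norm.continuousAt
      simp only [sub_self, norm_zero] at this
      exact this.mono_left nhdsWithin_le_nhds
    · have hev : f =ᶠ[nhds z₀] fun _ => (0:ℂ) := by
        filter_upwards [(isOpen_lt continuous_const Complex.continuous_re).mem_nhds h] with z hz
        simp only [hf]; rw [if_pos hz.le]
      exact (continuousAt_const.congr hev.symm).continuousWithinAt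
  -- 1 is not in the interior of X
  have hone : (1:ℂ) ∉ interior X := by
    intro hmem
    obtain ⟨ε, hε, hball⟩ := isOpen_interior.mem_nhds hmem |> Metric.mem_nhds_iff.mp
    set δ := min ε 1 / 2 with hδ
    have hδpos : 0 < δ := by positivity
    have hδε : δ < ε := by
      have h1 : min ε 1 ≤ ε := min_le_left _ _
      rw [hδ]; linarith
    have hp : (1 + δ * Complex.I) ∈ X := interior_subset <| hball <| by
      simp only [Metric.mem_ball, Complex.dist_eq]
      have : (1 + δ * Complex.I - 1) = δ * Complex.I := by ring
      rw [this]
      simp only [norm_mul, Complex.norm_I, mul_one, Complex.norm_real, Real.norm_eq_abs]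
      rwa [abs_of_pos hδpos]
    have hre : (1 + δ * Complex.I).re = 1 := by simp
    have him : (1 + δ * Complex.I).im = δ := by simp
    have hne1 : (1 + (δ:ℂ) * Complex.I) ≠ 1 := by
      intro h
      have := congrArg Complex.im h
      simp at this
      linarith
    exact hne1 (mem_X_re_eq_one hp hre)
  -- differentiability on interior X
  have hdiff : DifferentiableOn ℂ f (interior X) := by
    intro z₀ hz₀
    have hre : z₀.re ≠ 1 := by
      intro h
      exact hone ((mem_X_re_eq_one (interior_subset hz₀) h) ▸ hz₀)
    rcases hre.lt_or_gt with h | h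
    · have hev : f =ᶠ[nhds z₀] fun z => z - 1 := by
        filter_upwards [(isOpen_lt Complex.continuous_re continuous_const).mem_nhds h] with z hz
        simp only [hf]; rw [if_neg (not_le.mpr hz)]
      exact (((differentiable_id.sub (differentiable_const _)) z₀).congr_of_eventuallyEq
        hev).differentiableWithinAt
    · have hev : f =ᶠ[nhds z₀] fun _ => (0:ℂ) := by
        filter_upwards [(isOpen_lt continuous_const Complex.continuous_re).mem_nhds h] with z hz
        simp only [hf]; rw [if_pos hz.le]
      exact (((differentiable_const (0:ℂ)) z₀).congr_of_eventuallyEq hev).differentiableWithinAt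
  -- apply H with U = ball 2 1
  have hne : (Metric.ball (2:ℂ) 1 ∩ X).Nonempty := by
    refine ⟨2, Metric.mem_ball_self one_pos, Or.inr (Metric.mem_closedBall_self one_pos.le)⟩
  have hvanish : ∀ x ∈ Metric.ball (2:ℂ) 1 ∩ X, f x = 0 := by
    rintro x ⟨hx, -⟩
    have : ‖x - 2‖ < 1 := by
      rw [← Complex.dist_eq]; exact Metric.mem_ball.mp hx
    have hre : 1 ≤ x.re := by
      have := Complex.abs_re_le_norm (x - 2)
      simp only [Complex.sub_re] at this
      have h2 : (2:ℂ).re = 2 := by norm_num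
      rw [h2] at this
      have := abs_le.mp (this.trans (le_of_lt ‹‖x - 2‖ < 1›))
      linarith [this.1]
    simp [hf, hre]
  have := H f hcont hdiff (Metric.ball 2 1) Metric.isOpen_ball hne hvanish 0
    (Or.inl (Metric.mem_closedBall_self one_pos.le))
  simp [hf] at this
end
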